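/- (Fiberwise homotopy equivalence when levels vary through regular values.) Let δ : ℝ^m → ℝ be a continuously differentiable function whose negative gradient flow is globally defined. Fix real numbers t₀ < t₁ and set J = [t₀, t₁]. Let a, ã, b, b̃ : ℝ → ℝ be continuous on J with a(t) ≤ b(t) and ã(t) ≤ b̃(t) for all t ∈ J. Suppose there exist ε > 0 and ρ > 0 such that for every t ∈ J and every v ∈ ℝ^m with δ(v) ∈ [min(a(t),ã(t)) − ε, max(a(t),ã(t)) + ε] ∪ [min(b(t),b̃(t)) − ε, max(b(t),b̃(t)) + ε], one has ‖∇δ(v)‖ ≥ ρ (in particular, there are no critical values of δ between a(t) and ã(t), nor between b(t) and b̃(t)). Then (B_J, A_J) and (B̃_J, Ã_J) are fiberwise homotopy equivalent: there exist continuous maps h : B_J → B̃_J and k : B̃_J → B_J, each preserving the first coordinate t, with h(A_J) ⊆ Ã_J and k(Ã_J) ⊆ A_J, together with homotopies from k∘h to the identity of B_J and from h∘k to the identity of B̃_J that preserve the first coordinate at all times and map A_J into A_J (respectively Ã_J into Ã_J) at all times. -/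

import Mathlib

/-- Fiberwise homotopy equivalence of `(B_J, A_J)` and `(B̃_J, Ã_J)` when the levels
vary only through regular values of `δ`. -/
theorem stmt_8 (m : ℕ) (δ : EuclideanSpace ℝ (Fin m) → ℝ) (hδ : ContDiff ℝ 1 δ)
    (φ : ℝ × EuclideanSpace ℝ (Fin m) → EuclideanSpace ℝ (Fin m))
    (hφc : Continuous φ) (hφ0 : ∀ v, φ (0, v) = v)
    (hφ' : ∀ (v : EuclideanSpace ℝ (Fin m)) (s : ℝ),
      HasDerivAt (fun τ => φ (τ, v)) (-gradient δ (φ (s, v))) s)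
    (t₀ t₁ : ℝ) (ht : t₀ < t₁)
    (a at' b bt : ℝ → ℝ)
    (ha : ContinuousOn a (Set.Icc t₀ t₁)) (hat : ContinuousOn at' (Set.Icc t₀ t₁))
    (hb : ContinuousOn b (Set.Icc t₀ t₁)) (hbt : ContinuousOn bt (Set.Icc t₀ t₁))
    (hab : ∀ t ∈ Set.Icc t₀ t₁, a t ≤ b t)
    (habt : ∀ t ∈ Set.Icc t₀ t₁, at' t ≤ bt t)
    (hreg : ∃ ε > (0:ℝ), ∃ ρ > (0:ℝ), ∀ t ∈ Set.Icc t₀ t₁,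
      ∀ v : EuclideanSpace ℝ (Fin m),
        δ v ∈ Set.Icc (min (a t) (at' t) - ε) (max (a t) (at' t) + ε) ∪
              Set.Icc (min (b t) (bt t) - ε) (max (b t) (bt t) + ε) →
          ρ ≤ ‖gradient δ v‖) :
    let AJ : Set (ℝ × EuclideanSpace ℝ (Fin m)) :=
      {p | p.1 ∈ Set.Icc t₀ t₁ ∧ δ p.2 ≤ a p.1}
    let BJ : Set (ℝ × EuclideanSpace ℝ (Fin m)) :=
      {p | p.1 ∈ Set.Icc t₀ t₁ ∧ δ p.2 ≤ b p.1}
    let AtJ : Set (ℝ × EuclideanSpace ℝ (Fin m)) :=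
      {p | p.1 ∈ Set.Icc t₀ t₁ ∧ δ p.2 ≤ at' p.1}
    let BtJ : Set (ℝ × EuclideanSpace ℝ (Fin m)) :=
      {p | p.1 ∈ Set.Icc t₀ t₁ ∧ δ p.2 ≤ bt p.1}
    ∃ h k : ℝ × EuclideanSpace ℝ (Fin m) → ℝ × EuclideanSpace ℝ (Fin m),
    ∃ Hkh Hhk : ℝ × (ℝ × EuclideanSpace ℝ (Fin m)) → ℝ × EuclideanSpace ℝ (Fin m),
      -- h : (B_J, A_J) → (B̃_J, Ã_J), preserving the first coordinate
      ContinuousOn h BJ ∧ Set.MapsTo h BJ BtJ ∧ Set.MapsTo h AJ AtJ ∧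
      (∀ p ∈ BJ, (h p).1 = p.1) ∧
      -- k : (B̃_J, Ã_J) → (B_J, A_J), preserving the first coordinate
      ContinuousOn k BtJ ∧ Set.MapsTo k BtJ BJ ∧ Set.MapsTo k AtJ AJ ∧
      (∀ p ∈ BtJ, (k p).1 = p.1) ∧
      -- homotopy from k ∘ h to the identity of B_J
      ContinuousOn Hkh (Set.Icc (0:ℝ) 1 ×ˢ BJ) ∧
      (∀ s ∈ Set.Icc (0:ℝ) 1, ∀ p ∈ BJ, Hkh (s, p) ∈ BJ) ∧
      (∀ s ∈ Set.Icc (0:ℝ) 1, ∀ p ∈ AJ, Hkh (s, p) ∈ AJ) ∧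
      (∀ s ∈ Set.Icc (0:ℝ) 1, ∀ p ∈ BJ, (Hkh (s, p)).1 = p.1) ∧
      (∀ p ∈ BJ, Hkh (0, p) = k (h p)) ∧
      (∀ p ∈ BJ, Hkh (1, p) = p) ∧
      -- homotopy from h ∘ k to the identity of B̃_J
      ContinuousOn Hhk (Set.Icc (0:ℝ) 1 ×ˢ BtJ) ∧
      (∀ s ∈ Set.Icc (0:ℝ) 1, ∀ p ∈ BtJ, Hhk (s, p) ∈ BtJ) ∧
      (∀ s ∈ Set.Icc (0:ℝ) 1, ∀ p ∈ AtJ, Hhk (s, p) ∈ AtJ) ∧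
      (∀ s ∈ Set.Icc (0:ℝ) 1, ∀ p ∈ BtJ, (Hhk (s, p)).1 = p.1) ∧
      (∀ p ∈ BtJ, Hhk (0, p) = h (k p)) ∧
      (∀ p ∈ BtJ, Hhk (1, p) = p) := by
  intro AJ BJ AtJ BtJ
  obtain ⟨ε, hε, ρ, hρ, hreg⟩ := hreg
  -- the derivative of δ along the flow
  have hderiv : ∀ (v : EuclideanSpace ℝ (Fin m)) (s : ℝ),
      HasDerivAt (fun τ => δ (φ (τ, v))) (-‖gradient δ (φ (s, v))‖ ^ 2) s := by
    intro v s
    have hdiff : DifferentiableAt ℝ δ (φ (s, v)) :=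
      (hδ.differentiable one_ne_zero).differentiableAt
    have hgrad := hdiff.hasGradientAt.hasFDerivAt
    have := hgrad.comp_hasDerivAt s (hφ' v s)
    refine this.congr_deriv ?_
    rw [InnerProductSpace.toDual_apply_apply, inner_neg_right, real_inner_self_eq_norm_sq]
  -- δ is nonincreasing along the flow
  have hmono : ∀ (v : EuclideanSpace ℝ (Fin m)), Antitone (fun s => δ (φ (s, v))) := by
    intro v
    apply antitone_of_deriv_nonpos
    · exact fun s => (hderiv v s).differentiableAt
    · intro s
      rw [(hderiv v s).deriv]
      exact neg_nonpos.2 (by positivity)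
  have hmono' : ∀ (v : EuclideanSpace ℝ (Fin m)) (s : ℝ), 0 ≤ s → δ (φ (s, v)) ≤ δ v := by
    intro v s hs
    have := hmono v hs
    simpa [hφ0 v] using this
  -- a uniform bound on the level differences
  obtain ⟨tm, htm, hM⟩ := isCompact_Icc.exists_isMaxOn (Set.nonempty_Icc.2 ht.le)
    (((ha.sub hat).abs).add ((hb.sub hbt).abs))
  rw [isMaxOn_iff] at hM
  set M : ℝ := |a tm - at' tm| + |b tm - bt tm| with hMdef
  have hM0 : 0 ≤ M := by positivity
  have hMa : ∀ t ∈ Set.Icc t₀ t₁, |a t - at' t| ≤ M := by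
    intro t htJ
    have := hM t htJ
    simp only [Pi.add_apply, Pi.sub_apply] at this
    have h2 : (0:ℝ) ≤ |b t - bt t| := abs_nonneg _
    linarith
  have hMb : ∀ t ∈ Set.Icc t₀ t₁, |b t - bt t| ≤ M := by
    intro t htJ
    have := hM t htJ
    simp only [Pi.add_apply, Pi.sub_apply] at this
    have h2 : (0:ℝ) ≤ |a t - at' t| := abs_nonneg _
    linarith
  set T : ℝ := M / ρ ^ 2 with hTdef
  have hT0 : 0 ≤ T := div_nonneg hM0 (by positivity)
  have hTM : ρ ^ 2 * T = M := by
    rw [hTdef]; field_simp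
  -- the key quantitative lemma
  have key : ∀ (y z : ℝ),
      (∀ v : EuclideanSpace ℝ (Fin m),
        δ v ∈ Set.Icc (min y z - ε) (max y z + ε) → ρ ≤ ‖gradient δ v‖) →
      y - z ≤ M → ∀ x : EuclideanSpace ℝ (Fin m), δ x ≤ y → δ (φ (T, x)) ≤ z := by
    intro y z hband hyz x hx
    by_contra hc
    push_neg at hc
    set g : ℝ → ℝ := fun s => δ (φ (s, x)) with hgdef
    have hg0 : g 0 = δ x := by simp [hgdef, hφ0]
    have hupper : ∀ s ∈ Set.Icc (0:ℝ) T, g s ≤ y := by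
      intro s hs
      calc g s ≤ g 0 := hmono x hs.1
        _ ≤ y := by rw [hg0]; exact hx
    have hlower : ∀ s ∈ Set.Icc (0:ℝ) T, z < g s := by
      intro s hs
      calc z < g T := hc
        _ ≤ g s := hmono x hs.2
    have hd : ∀ s ∈ Set.Icc (0:ℝ) T, ρ ≤ ‖gradient δ (φ (s, x))‖ := by
      intro s hs
      apply hband
      constructor
      · calc min y z - ε ≤ z - ε := by simp [min_le_right]
          _ ≤ z := by linarith
          _ ≤ g s := (hlower s hs).le
      · calc g s ≤ y := hupper s hs
          _ ≤ max y z := le_max_left _ _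
          _ ≤ max y z + ε := by linarith
    -- G s = g s + ρ² s is antitone on [0, T]
    have hG : AntitoneOn (fun s => g s + ρ ^ 2 * s) (Set.Icc 0 T) := by
      apply antitoneOn_of_deriv_nonpos (convex_Icc 0 T)
      · have hgc : Continuous g :=
          hδ.continuous.comp (hφc.comp (continuous_id.prodMk continuous_const))
        exact (hgc.add (continuous_const.mul continuous_id)).continuousOn
      · intro s _
        exact (((hderiv x s).add ((hasDerivAt_id s).const_mul (ρ ^ 2))).differentiableAt).differentiableWithinAt
      · intro s hs
        rw [interior_Icc] at hs
        have hD := ((hderiv x s).add ((hasDerivAt_id s).const_mul (ρ ^ 2)))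
        rw [HasDerivAt.deriv (show HasDerivAt (fun s => g s + ρ ^ 2 * s) _ s from hD)]
        have := hd s ⟨hs.1.le, hs.2.le⟩
        have h2 : ρ ^ 2 ≤ ‖gradient δ (φ (s, x))‖ ^ 2 := by
          apply pow_le_pow_left₀ hρ.le this
        linarith
    have hGle := hG (Set.left_mem_Icc.2 hT0) (Set.right_mem_Icc.2 hT0) hT0
    simp only [mul_zero, add_zero, hg0] at hGle
    have : g T ≤ z := by
      have h1 : ρ ^ 2 * T = M := hTM
      have h2 : y - z ≤ M := hyz
      linarith [hx]
    exact absurd this (not_le.2 hc)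
  -- the four mapping properties
  have hbandA : ∀ t ∈ Set.Icc t₀ t₁, ∀ v : EuclideanSpace ℝ (Fin m),
      δ v ∈ Set.Icc (min (a t) (at' t) - ε) (max (a t) (at' t) + ε) → ρ ≤ ‖gradient δ v‖ :=
    fun t htJ v hv => hreg t htJ v (Or.inl hv)
  have hbandB : ∀ t ∈ Set.Icc t₀ t₁, ∀ v : EuclideanSpace ℝ (Fin m),
      δ v ∈ Set.Icc (min (b t) (bt t) - ε) (max (b t) (bt t) + ε) → ρ ≤ ‖gradient δ v‖ :=
    fun t htJ v hv => hreg t htJ v (Or.inr hv)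
  have push_b : ∀ t ∈ Set.Icc t₀ t₁, ∀ x, δ x ≤ b t → δ (φ (T, x)) ≤ bt t := by
    intro t htJ x hx
    exact key (b t) (bt t) (fun v hv => hbandB t htJ v hv)
      (by have := hMb t htJ; rw [abs_le] at this; linarith [this.2]) x hx
  have push_bt : ∀ t ∈ Set.Icc t₀ t₁, ∀ x, δ x ≤ bt t → δ (φ (T, x)) ≤ b t := by
    intro t htJ x hx
    apply key (bt t) (b t) (fun v hv => hbandB t htJ v (by rwa [min_comm, max_comm]))
      (by have := hMb t htJ; rw [abs_le] at this; linarith [this.1]) x hx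
  have push_a : ∀ t ∈ Set.Icc t₀ t₁, ∀ x, δ x ≤ a t → δ (φ (T, x)) ≤ at' t := by
    intro t htJ x hx
    exact key (a t) (at' t) (fun v hv => hbandA t htJ v hv)
      (by have := hMa t htJ; rw [abs_le] at this; linarith [this.2]) x hx
  have push_at : ∀ t ∈ Set.Icc t₀ t₁, ∀ x, δ x ≤ at' t → δ (φ (T, x)) ≤ a t := by
    intro t htJ x hx
    apply key (at' t) (a t) (fun v hv => hbandA t htJ v (by rwa [min_comm, max_comm]))
      (by have := hMa t htJ; rw [abs_le] at this; linarith [this.1]) x hx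
  -- the maps and homotopies
  have hcont1 : Continuous (fun p : ℝ × EuclideanSpace ℝ (Fin m) => (p.1, φ (T, p.2))) :=
    continuous_fst.prodMk (hφc.comp (continuous_const.prodMk continuous_snd))
  have hts1 : Continuous (fun q : ℝ × (ℝ × EuclideanSpace ℝ (Fin m)) =>
      T * min (2 * (1 - q.1)) 1) :=
    continuous_const.mul ((continuous_const.mul
      (continuous_const.sub continuous_fst)).min continuous_const)
  have hts2 : Continuous (fun q : ℝ × (ℝ × EuclideanSpace ℝ (Fin m)) =>
      T * max (1 - 2 * q.1) 0) :=
    continuous_const.mul ((continuous_const.sub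
      (continuous_const.mul continuous_fst)).max continuous_const)
  have hH : Continuous (fun q : ℝ × (ℝ × EuclideanSpace ℝ (Fin m)) =>
      ((q.2).1, φ (T * max (1 - 2 * q.1) 0, φ (T * min (2 * (1 - q.1)) 1, (q.2).2)))) :=
    (continuous_fst.comp continuous_snd).prodMk (hφc.comp (hts2.prodMk
      (hφc.comp (hts1.prodMk (continuous_snd.comp continuous_snd)))))
  refine ⟨fun p => (p.1, φ (T, p.2)), fun p => (p.1, φ (T, p.2)),
    fun q => ((q.2).1, φ (T * max (1 - 2 * q.1) 0, φ (T * min (2 * (1 - q.1)) 1, (q.2).2))),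
    fun q => ((q.2).1, φ (T * max (1 - 2 * q.1) 0, φ (T * min (2 * (1 - q.1)) 1, (q.2).2))),
    ?_, ?_, ?_, ?_, ?_, ?_, ?_, ?_, ?_, ?_, ?_, ?_, ?_, ?_, ?_, ?_, ?_, ?_, ?_, ?_⟩
  -- continuity facts used often
  case _ => exact hcont1.continuousOn
  case _ => exact fun p hp => ⟨hp.1, push_b p.1 hp.1 p.2 hp.2⟩
  case _ => exact fun p hp => ⟨hp.1, push_a p.1 hp.1 p.2 hp.2⟩
  case _ => exact fun p _ => rfl
  case _ => exact hcont1.continuousOn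
  case _ => exact fun p hp => ⟨hp.1, push_bt p.1 hp.1 p.2 hp.2⟩
  case _ => exact fun p hp => ⟨hp.1, push_at p.1 hp.1 p.2 hp.2⟩
  case _ => exact fun p _ => rfl
  case _ => exact hH.continuousOn
  case _ =>
    intro s hs p hp
    refine ⟨hp.1, ?_⟩
    have h1 : 0 ≤ T * min (2 * (1 - s)) 1 := by
      apply mul_nonneg hT0
      rcases le_or_gt (2 * (1 - s)) 1 with h | h
      · rw [min_eq_left h]; nlinarith [hs.2]
      · rw [min_eq_right h.le]; norm_num
    have h2 : 0 ≤ T * max (1 - 2 * s) 0 := mul_nonneg hT0 (le_max_right _ _)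
    calc δ (φ (T * max (1 - 2 * s) 0, φ (T * min (2 * (1 - s)) 1, p.2)))
        ≤ δ (φ (T * min (2 * (1 - s)) 1, p.2)) := hmono' _ _ h2
      _ ≤ δ p.2 := hmono' _ _ h1
      _ ≤ b p.1 := hp.2
  case _ =>
    intro s hs p hp
    refine ⟨hp.1, ?_⟩
    have h1 : 0 ≤ T * min (2 * (1 - s)) 1 := by
      apply mul_nonneg hT0
      rcases le_or_gt (2 * (1 - s)) 1 with h | h
      · rw [min_eq_left h]; nlinarith [hs.2]
      · rw [min_eq_right h.le]; norm_num
    have h2 : 0 ≤ T * max (1 - 2 * s) 0 := mul_nonneg hT0 (le_max_right _ _)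
    calc δ (φ (T * max (1 - 2 * s) 0, φ (T * min (2 * (1 - s)) 1, p.2)))
        ≤ δ (φ (T * min (2 * (1 - s)) 1, p.2)) := hmono' _ _ h2
      _ ≤ δ p.2 := hmono' _ _ h1
      _ ≤ a p.1 := hp.2
  case _ => exact fun s _ p _ => rfl
  case _ => intro p _; norm_num
  case _ => intro p _; norm_num [hφ0]
  case _ => exact hH.continuousOn
  case _ =>
    intro s hs p hp
    refine ⟨hp.1, ?_⟩
    have h1 : 0 ≤ T * min (2 * (1 - s)) 1 := by
      apply mul_nonneg hT0
      rcases le_or_gt (2 * (1 - s)) 1 with h | h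
      · rw [min_eq_left h]; nlinarith [hs.2]
      · rw [min_eq_right h.le]; norm_num
    have h2 : 0 ≤ T * max (1 - 2 * s) 0 := mul_nonneg hT0 (le_max_right _ _)
    calc δ (φ (T * max (1 - 2 * s) 0, φ (T * min (2 * (1 - s)) 1, p.2)))
        ≤ δ (φ (T * min (2 * (1 - s)) 1, p.2)) := hmono' _ _ h2
      _ ≤ δ p.2 := hmono' _ _ h1
      _ ≤ bt p.1 := hp.2
  case _ =>
    intro s hs p hp
    refine ⟨hp.1, ?_⟩
    have h1 : 0 ≤ T * min (2 * (1 - s)) 1 := by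
      apply mul_nonneg hT0
      rcases le_or_gt (2 * (1 - s)) 1 with h | h
      · rw [min_eq_left h]; nlinarith [hs.2]
      · rw [min_eq_right h.le]; norm_num
    have h2 : 0 ≤ T * max (1 - 2 * s) 0 := mul_nonneg hT0 (le_max_right _ _)
    calc δ (φ (T * max (1 - 2 * s) 0, φ (T * min (2 * (1 - s)) 1, p.2)))
        ≤ δ (φ (T * min (2 * (1 - s)) 1, p.2)) := hmono' _ _ h2
      _ ≤ δ p.2 := hmono' _ _ h1
      _ ≤ at' p.1 := hp.2
  case _ => exact fun s _ p _ => rfl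
  case _ => intro p _; norm_num
  case _ => intro p _; norm_num [hφ0]
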